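/- Assume F is a finite field, K ≥ 1, and the Ordered-Degree Condition deg m_0 ≤ deg m_1 ≤ … ≤ deg m_{n-1}. Then the minimum Hamming distance of the polynomial remainder code C, i.e. the minimum over pairs of distinct codewords c, c' ∈ C of the number of indices i with c_i ≠ c'_i, equals exactly n − k + 1. -/

import Mathlib

open Polynomial Finset

lemma fin_strictMono_le {k n : ℕ} (f : Fin k → Fin n) (hf : StrictMono f) :
    ∀ j : Fin k, (j : ℕ) ≤ (f j : ℕ) := by
  intro j
  obtain ⟨jv, hj⟩ := j
  induction jv with
  | zero => exact Nat.zero_le _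
  | succ v ih =>
    have hv : v < k := Nat.lt_of_succ_lt hj
    have h1 : f ⟨v, hv⟩ < f ⟨v+1, hj⟩ := hf (by simp [Fin.lt_def])
    have h2 := ih hv
    have h3 := Fin.lt_def.mp h1
    simp only [Fin.val_mk] at h2 h3 ⊢
    omega

lemma filter_lt_eq_map {n c : ℕ} (hc : c ≤ n) :
    Finset.univ.filter (fun i : Fin n => (i : ℕ) < c)
      = Finset.map (Fin.castLEEmb hc) Finset.univ := by
  ext i
  simp only [mem_filter, mem_univ, true_and, Finset.mem_map]
  constructor
  · intro h
    exact ⟨⟨(i : ℕ), h⟩, by ext; simp⟩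
  · rintro ⟨j, rfl⟩
    simpa using j.2

lemma sum_filter_lt_le {n c : ℕ} (hc : c ≤ n) (f : Fin n → ℕ)
    (hord : ∀ i j : Fin n, i ≤ j → f i ≤ f j) (S : Finset (Fin n)) (hS : S.card = c) :
    ∑ i ∈ Finset.univ.filter (fun i : Fin n => (i : ℕ) < c), f i ≤ ∑ i ∈ S, f i := by
  have hSmap : S = Finset.map (S.orderEmbOfFin hS).toEmbedding Finset.univ := by
    ext i
    simp only [Finset.mem_map, mem_univ, true_and, RelEmbedding.coe_toEmbedding]
    constructor
    · intro hi
      have : i ∈ Set.range (S.orderEmbOfFin hS) := by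
        rw [Finset.range_orderEmbOfFin]; exact hi
      obtain ⟨j, hj⟩ := this; exact ⟨j, hj⟩
    · rintro ⟨j, rfl⟩; exact Finset.orderEmbOfFin_mem S hS j
  rw [filter_lt_eq_map hc, hSmap, Finset.sum_map, Finset.sum_map]
  apply Finset.sum_le_sum
  intro j _
  apply hord
  rw [Fin.le_def]
  exact fin_strictMono_le _ (S.orderEmbOfFin hS).strictMono j

/-- For a finite field `F`, `K ≥ 1`, and the Ordered-Degree Condition, the minimum
Hamming distance of the polynomial remainder code equals exactly `n − k + 1`. -/
theorem polynomial_remainder_code_min_hamming_distance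
    {F : Type*} [Field F] [Fintype F] [DecidableEq F] (n : ℕ) (hn : 1 ≤ n)
    (m : Fin n → F[X])
    (hmonic : ∀ i, (m i).Monic)
    (hdeg : ∀ i, 1 ≤ (m i).natDegree)
    (hcop : ∀ i j, i ≠ j → IsCoprime (m i) (m j))
    (k : ℕ) (hk1 : 1 ≤ k) (hkn : k ≤ n)
    (K : ℕ)
    (hK : K = (∏ i ∈ Finset.univ.filter (fun i : Fin n => (i : ℕ) < k), m i).natDegree)
    (hK1 : 1 ≤ K)
    (hord : ∀ i j : Fin n, i ≤ j → (m i).natDegree ≤ (m j).natDegree) :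
    IsLeast {d : ℕ | ∃ a a' : F[X], a.degree < (K : WithBot ℕ) ∧ a'.degree < (K : WithBot ℕ) ∧
        (fun i : Fin n => a %ₘ m i) ≠ (fun i : Fin n => a' %ₘ m i) ∧
        d = (Finset.univ.filter (fun i : Fin n => a %ₘ m i ≠ a' %ₘ m i)).card}
      (n - k + 1) := by
  have hKsum : K = ∑ i ∈ Finset.univ.filter (fun i : Fin n => (i : ℕ) < k), (m i).natDegree := by
    rw [hK, Polynomial.natDegree_prod _ _ (fun i _ => (hmonic i).ne_zero)]
  constructor
  · -- membership
    set a : F[X] := ∏ i ∈ Finset.univ.filter (fun i : Fin n => (i : ℕ) < k - 1), m i with ha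
    have hamonic : a.Monic := monic_prod_of_monic _ _ fun i _ => hmonic i
    have hi0 : k - 1 < n := by omega
    set i0 : Fin n := ⟨k - 1, hi0⟩ with hi0def
    have hadeg : a.natDegree < K := by
      rw [ha, Polynomial.natDegree_prod _ _ (fun i _ => (hmonic i).ne_zero), hKsum]
      apply Finset.sum_lt_sum_of_subset
      · intro i hi
        simp only [Finset.mem_filter, Finset.mem_univ, true_and] at hi ⊢
        omega
      · show i0 ∈ _; simp [hi0def]; omega
      · show i0 ∉ _; simp [hi0def]
      · exact hdeg i0
      · intro j _ _; exact Nat.zero_le _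
    have hmod : ∀ i : Fin n, (i : ℕ) < k - 1 → a %ₘ m i = 0 := fun i hi =>
      (Polynomial.modByMonic_eq_zero_iff_dvd (hmonic i)).mpr
        (Finset.dvd_prod_of_mem m (by simp [hi]))
    have hmodne : ∀ i : Fin n, ¬ (i : ℕ) < k - 1 → a %ₘ m i ≠ 0 := by
      intro i hi h
      have hdvd := (Polynomial.modByMonic_eq_zero_iff_dvd (hmonic i)).mp h
      have hco : IsCoprime (m i) a := by
        apply IsCoprime.prod_right
        intro j hj
        apply hcop
        intro e
        simp only [Finset.mem_filter, Finset.mem_univ, true_and] at hj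
        rw [← e] at hj
        exact hi hj
      exact Polynomial.not_isUnit_of_natDegree_pos _ (hdeg i) (hco.isUnit_of_dvd hdvd)
    refine ⟨a, 0, ?_, ?_, ?_, ?_⟩
    · exact (Polynomial.natDegree_lt_iff_degree_lt hamonic.ne_zero).mp hadeg
    · rw [Polynomial.degree_zero]
      exact bot_lt_iff_ne_bot.mpr (by simp)
    · intro h
      have := congrFun h i0
      simp only [Polynomial.zero_modByMonic] at this
      exact hmodne i0 (by simp [hi0def]) this
    · have hfc : Finset.univ.filter (fun i : Fin n => a %ₘ m i ≠ (0 : F[X]) %ₘ m i)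
          = Finset.univ.filter (fun i : Fin n => ¬ (i : ℕ) < k - 1) := by
        apply Finset.filter_congr
        intro i _
        rw [Polynomial.zero_modByMonic]
        constructor
        · intro h hi; exact h (hmod i hi)
        · intro h; exact hmodne i h
      rw [hfc]
      have h1 := Finset.card_filter_add_card_filter_not
        (s := Finset.univ) (p := fun i : Fin n => (i : ℕ) < k - 1)
      have h2 : (Finset.univ.filter (fun i : Fin n => (i : ℕ) < k - 1)).card = k - 1 := by
        rw [filter_lt_eq_map (by omega : k - 1 ≤ n), Finset.card_map, Finset.card_univ,
          Fintype.card_fin]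
      rw [Finset.card_univ, Fintype.card_fin] at h1
      omega
  · -- lower bound
    rintro d ⟨a, a', hda, hda', hne, rfl⟩
    have haa : a ≠ a' := fun h => hne (by rw [h])
    have hbne : a - a' ≠ 0 := sub_ne_zero.mpr haa
    have hbdeg : (a - a').natDegree < K := by
      rw [Polynomial.natDegree_lt_iff_degree_lt hbne]
      exact lt_of_le_of_lt (Polynomial.degree_sub_le a a') (max_lt hda hda')
    have h1 := Finset.card_filter_add_card_filter_not
      (s := Finset.univ) (p := fun i : Fin n => a %ₘ m i ≠ a' %ₘ m i)
    rw [Finset.card_univ, Fintype.card_fin] at h1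
    have hfc : Finset.univ.filter (fun i : Fin n => ¬ a %ₘ m i ≠ a' %ₘ m i)
        = Finset.univ.filter (fun i : Fin n => a %ₘ m i = a' %ₘ m i) := by
      apply Finset.filter_congr; intro i _; simp
    rw [hfc] at h1
    set Sc := Finset.univ.filter (fun i : Fin n => a %ₘ m i = a' %ₘ m i) with hSc
    have hSck : Sc.card < k := by
      by_contra h
      push_neg at h
      obtain ⟨S', hsub, hcard⟩ := Finset.exists_subset_card_eq h
      have hdvd : ∀ i ∈ S', m i ∣ (a - a') := by
        intro i hi
        have heq : a %ₘ m i = a' %ₘ m i := (Finset.mem_filter.mp (hsub hi)).2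
        rw [← Polynomial.modByMonic_eq_zero_iff_dvd (hmonic i),
          Polynomial.sub_modByMonic, heq, sub_self]
      have hprod : ∏ i ∈ S', m i ∣ (a - a') :=
        Finset.prod_dvd_of_coprime (fun i _ j _ hij => hcop i j hij) hdvd
      have hdegle : ∑ i ∈ S', (m i).natDegree ≤ (a - a').natDegree := by
        rw [← Polynomial.natDegree_prod _ _ (fun i _ => (hmonic i).ne_zero)]
        exact Polynomial.natDegree_le_of_dvd hprod hbne
      have hge : ∑ i ∈ Finset.univ.filter (fun i : Fin n => (i : ℕ) < k), (m i).natDegree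
          ≤ ∑ i ∈ S', (m i).natDegree :=
        sum_filter_lt_le hkn (fun i => (m i).natDegree) hord S' hcard
      omega
    omega
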